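/- Suppose f satisfies the Lipschitz-in-z condition |f(y,z) − f(y,z')| ≤ λ|z − z'| for all y, z, z' (λ > 0), and let f_n(y,z) = (f(y, q_n(z)) − f⁰)·(n/(π(s) ∨ n)) + f⁰ and similarly f_{n+i}. Then for any y with |y| ≤ r and any z, |f_{n+i}(y,z) − f_n(y,z)| ≤ 2λ|z|·1_{|z| > n} + 2λ|z|·1_{π(s) > n} + 2π(s)·1_{π(s) > n}, where π(s) = sup_{|y| ≤ r+1}|f(y,0) − f⁰| is assumed finite and f⁰ is a fixed vector. -/

import Mathlib

/-- If `f` is `λ`-Lipschitz in `z` and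
`f_n(y,z) = (n/(π∨n))·(f(y, q_n(z)) − f⁰) + f⁰` with
`π ≥ sup_{|y| ≤ r+1} |f(y,0) − f⁰|`, then for `|y| ≤ r`,
`|f_{n+i}(y,z) − f_n(y,z)| ≤ 2λ|z|·1_{|z|>n} + 2λ|z|·1_{π>n} + 2π·1_{π>n}`. -/
theorem stmt_10 (k d : ℕ) (n i : ℕ) (hn : 1 ≤ n) (hi : 1 ≤ i)
    (lam r π : ℝ) (hlam : 0 < lam) (hr : 0 < r) (hπ : 0 ≤ π)
    (f : EuclideanSpace ℝ (Fin k) → EuclideanSpace ℝ (Fin k × Fin d) →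
      EuclideanSpace ℝ (Fin k))
    (f0 : EuclideanSpace ℝ (Fin k))
    (hlip : ∀ y z z', ‖f y z - f y z'‖ ≤ lam * ‖z - z'‖)
    (hπbound : ∀ y : EuclideanSpace ℝ (Fin k), ‖y‖ ≤ r + 1 → ‖f y 0 - f0‖ ≤ π)
    (q : ℕ → EuclideanSpace ℝ (Fin k × Fin d) → EuclideanSpace ℝ (Fin k × Fin d))
    (hq : q = fun (m : ℕ) z => ((m : ℝ) / max ‖z‖ (m : ℝ)) • z)
    (fn : ℕ → EuclideanSpace ℝ (Fin k) → EuclideanSpace ℝ (Fin k × Fin d) →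
      EuclideanSpace ℝ (Fin k))
    (hfn : fn = fun (m : ℕ) y z => ((m : ℝ) / max π (m : ℝ)) • (f y (q m z) - f0) + f0) :
    ∀ y, ‖y‖ ≤ r → ∀ z,
      ‖fn (n + i) y z - fn n y z‖ ≤
        (if (n : ℝ) < ‖z‖ then 2 * lam * ‖z‖ else 0)
          + (if (n : ℝ) < π then 2 * lam * ‖z‖ else 0)
          + (if (n : ℝ) < π then 2 * π else 0) := by
  subst hq hfn
  intro y hy z
  simp only
  have hn0 : (0:ℝ) < n := by exact_mod_cast hn
  have hm0 : (0:ℝ) < ((n + i : ℕ) : ℝ) := by positivity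
  have hnm : (n:ℝ) ≤ ((n + i : ℕ) : ℝ) := by exact_mod_cast Nat.le_add_right n i
  have hqle : ∀ p : ℕ, (0:ℝ) < p → ‖((p : ℝ) / max ‖z‖ (p:ℝ)) • z‖ ≤ ‖z‖ := by
    intro p hp
    rw [norm_smul, Real.norm_eq_abs]
    have h0 : (0:ℝ) ≤ (p:ℝ) / max ‖z‖ p :=
      div_nonneg (le_of_lt hp) (le_trans (le_of_lt hp) (le_max_right _ _))
    have h1 : (p:ℝ) / max ‖z‖ p ≤ 1 := by
      rw [div_le_one (lt_of_lt_of_le hp (le_max_right _ _))]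
      exact le_max_right _ _
    calc |(p:ℝ) / max ‖z‖ p| * ‖z‖ ≤ 1 * ‖z‖ := by
          apply mul_le_mul_of_nonneg_right _ (norm_nonneg z)
          rwa [abs_of_nonneg h0]
      _ = ‖z‖ := one_mul _
  have hqeq : ∀ p : ℕ, (0:ℝ) < p → ‖z‖ ≤ (p:ℝ) →
      ((p : ℝ) / max ‖z‖ (p:ℝ)) • z = z := by
    intro p hp hzp
    rw [max_eq_right hzp, div_self (ne_of_gt hp), one_smul]
  have hgb : ∀ w : EuclideanSpace ℝ (Fin k × Fin d), ‖w‖ ≤ ‖z‖ →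
      ‖f y w - f0‖ ≤ lam * ‖z‖ + π := by
    intro w hw
    calc ‖f y w - f0‖ ≤ ‖f y w - f y 0‖ + ‖f y 0 - f0‖ :=
          norm_sub_le_norm_sub_add_norm_sub _ _ _
      _ ≤ lam * ‖w - 0‖ + π := add_le_add (hlip y w 0) (hπbound y (le_trans hy (by linarith)))
      _ = lam * ‖w‖ + π := by rw [sub_zero]
      _ ≤ lam * ‖z‖ + π := by nlinarith
  set w' : EuclideanSpace ℝ (Fin k × Fin d) :=
    (((n + i : ℕ) : ℝ) / max ‖z‖ ((n + i : ℕ) : ℝ)) • z with hw'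
  set w : EuclideanSpace ℝ (Fin k × Fin d) := ((n : ℝ) / max ‖z‖ (n : ℝ)) • z with hw
  set A : ℝ := ((n + i : ℕ) : ℝ) / max π ((n + i : ℕ) : ℝ) with hA
  set B : ℝ := (n : ℝ) / max π (n : ℝ) with hB
  set g' : EuclideanSpace ℝ (Fin k) := f y w' - f0 with hg'
  set g : EuclideanSpace ℝ (Fin k) := f y w - f0 with hg
  clear_value w' w A B g' g
  have hA0 : 0 ≤ A := hA ▸ div_nonneg (le_of_lt hm0) (le_trans (le_of_lt hm0) (le_max_right _ _))
  have hA1 : A ≤ 1 := by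
    rw [hA, div_le_one (lt_of_lt_of_le hm0 (le_max_right _ _))]
    exact le_max_right _ _
  have hB0 : 0 ≤ B := hB ▸ div_nonneg (le_of_lt hn0) (le_trans (le_of_lt hn0) (le_max_right _ _))
  have hB1 : B ≤ 1 := by
    rw [hB, div_le_one (lt_of_lt_of_le hn0 (le_max_right _ _))]
    exact le_max_right _ _
  have hsplit : (A • g' + f0) - (B • g + f0) = A • (g' - g) + (A - B) • g := by
    rw [smul_sub, sub_smul]; abel
  have hmain : ‖(A • g' + f0) - (B • g + f0)‖ ≤ ‖g' - g‖ + |A - B| * ‖g‖ := by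
    rw [hsplit]
    calc ‖A • (g' - g) + (A - B) • g‖ ≤ ‖A • (g' - g)‖ + ‖(A - B) • g‖ := norm_add_le _ _
      _ = |A| * ‖g' - g‖ + |A - B| * ‖g‖ := by
          rw [norm_smul, norm_smul, Real.norm_eq_abs, Real.norm_eq_abs]
      _ ≤ 1 * ‖g' - g‖ + |A - B| * ‖g‖ := by
          apply add_le_add_left
          apply mul_le_mul_of_nonneg_right _ (norm_nonneg _)
          rwa [abs_of_nonneg hA0]
      _ = ‖g' - g‖ + |A - B| * ‖g‖ := by ring
  have hgg : ‖g' - g‖ ≤ (if (n : ℝ) < ‖z‖ then 2 * lam * ‖z‖ else 0) := by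
    by_cases hzn : (n:ℝ) < ‖z‖
    · rw [if_pos hzn]
      have e : g' - g = f y w' - f y w := by rw [hg', hg]; abel
      calc ‖g' - g‖ = ‖f y w' - f y w‖ := by rw [e]
        _ ≤ lam * ‖w' - w‖ := hlip _ _ _
        _ ≤ lam * (‖w'‖ + ‖w‖) :=
            mul_le_mul_of_nonneg_left (norm_sub_le _ _) (le_of_lt hlam)
        _ ≤ lam * (‖z‖ + ‖z‖) := by
            apply mul_le_mul_of_nonneg_left _ (le_of_lt hlam)
            exact add_le_add (hw' ▸ hqle _ hm0) (hw ▸ hqle _ hn0)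
        _ = 2 * lam * ‖z‖ := by ring
    · rw [if_neg hzn]
      push_neg at hzn
      have e1 : w' = z := hw'.trans (hqeq _ hm0 (le_trans hzn hnm))
      have e2 : w = z := hw.trans (hqeq _ hn0 hzn)
      rw [hg', hg, e1, e2, sub_self, norm_zero]
  have hab : |A - B| * ‖g‖ ≤ (if (n : ℝ) < π then 2 * lam * ‖z‖ else 0)
      + (if (n : ℝ) < π then 2 * π else 0) := by
    by_cases hpn : (n:ℝ) < π
    · rw [if_pos hpn, if_pos hpn]
      have habs : |A - B| ≤ 1 := by
        rw [abs_le]; constructor <;> nlinarith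
      have hgle : ‖g‖ ≤ lam * ‖z‖ + π := by
        rw [hg]; exact hgb _ (hw ▸ hqle _ hn0)
      calc |A - B| * ‖g‖ ≤ 1 * (lam * ‖z‖ + π) :=
            mul_le_mul habs hgle (norm_nonneg _) zero_le_one
        _ ≤ 2 * lam * ‖z‖ + 2 * π := by nlinarith [norm_nonneg z]
    · rw [if_neg hpn, if_neg hpn]
      push_neg at hpn
      have eA : A = 1 := by
        rw [hA, max_eq_right (le_trans hpn hnm), div_self (ne_of_gt hm0)]
      have eB : B = 1 := by
        rw [hB, max_eq_right hpn, div_self (ne_of_gt hn0)]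
      rw [eA, eB, sub_self, abs_zero, zero_mul, add_zero]
  calc ‖(A • g' + f0) - (B • g + f0)‖ ≤ ‖g' - g‖ + |A - B| * ‖g‖ := hmain
    _ ≤ _ := by rw [add_assoc]; exact add_le_add hgg hab
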